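/- Let t+3 ≤ k ≤ 2t+2 with (k,t) ≠ (4,1), and n ≥ 2L(k,t), where L(k,t) = (t+1) + (k-t+1)·log₂((t+1)(k-t+1)). Then (t+2)·S(n-t-1, k-t-1) − (t+1)·S(n-t-2, k-t-2) > Σ_{j=1}^{k-t} (−1)^{j−1}·C(k-t,j)·S(n-t-j, k-t-j) + t; that is, |A(n,k,t)| > |H(n,k,t)|. Moreover, if (k,t) = (4,1) the two quantities are equal, both being 3·S(n-2,2) − 2. -/

import Mathlib

/-- Stirling numbers of the second kind. -/
def stirling : ℕ → ℕ → ℕ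
  | 0, 0 => 1
  | 0, _ + 1 => 0
  | _ + 1, 0 => 0
  | n + 1, k + 1 => stirling n k + (k + 1) * stirling n (k + 1)

/-- The threshold function `L(k,t) = (t+1) + (k-t+1)·log₂((t+1)(k-t+1))`. -/
noncomputable def Lkt (k t : ℕ) : ℝ :=
  ((t : ℝ) + 1) + ((k : ℝ) - t + 1) * Real.logb 2 (((t : ℝ) + 1) * ((k : ℝ) - t + 1))

lemma stirling_succ_succ (n k : ℕ) :
    stirling (n+1) (k+1) = stirling n k + (k + 1) * stirling n (k+1) := rfl

lemma stirling_succ_zero (n : ℕ) : stirling (n+1) 0 = 0 := rfl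

lemma stirling_of_lt : ∀ n k : ℕ, n < k → stirling n k = 0 := by
  intro n
  induction n with
  | zero => intro k hk; match k, hk with | k+1, _ => rfl
  | succ n ih =>
    intro k hk
    match k, hk with
    | k+1, hk =>
      rw [stirling_succ_succ, ih k (by omega), ih (k+1) (by omega)]
      simp

lemma stirling_one (n : ℕ) : stirling (n+1) 1 = 1 := by
  induction n with
  | zero => rfl
  | succ n ih =>
    rw [stirling_succ_succ, stirling_succ_zero]
    simpa using ih

lemma stirling_pos : ∀ n k : ℕ, 1 ≤ k → k ≤ n → 0 < stirling n k := by
  intro n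
  induction n with
  | zero => omega
  | succ n ih =>
    intro k h1 h2
    match k, h1 with
    | 1, _ => rw [stirling_one]; norm_num
    | k+2, _ =>
      rw [stirling_succ_succ]
      have := ih (k+1) (by omega) (by omega)
      omega

lemma stirling_le_succ (n k : ℕ) : stirling n k ≤ stirling (n+1) (k+1) := by
  rw [stirling_succ_succ]; omega

lemma stirling_id (N : ℕ) : ∀ K : ℕ,
    ∑ j ∈ Finset.range (K+1), K.choose j * j.factorial * stirling N j = K ^ N := by
  induction N with
  | zero =>
    intro K
    rw [Finset.sum_range_succ']
    simp [stirling]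
  | succ N ih =>
    intro K
    rw [Finset.sum_range_succ']
    have h1 : ∀ i, K.choose (i+1) * (i+1).factorial * stirling (N+1) (i+1)
        = (K - i) * (K.choose i * i.factorial * stirling N i)
          + (i+1) * (K.choose (i+1) * (i+1).factorial * stirling N (i+1)) := by
      intro i
      have hc : K.choose (i+1) * (i+1) = K.choose i * (K - i) := Nat.choose_succ_right_eq K i
      calc K.choose (i+1) * (i+1).factorial * stirling (N+1) (i+1)
          = K.choose (i+1) * ((i+1) * i.factorial) *
              (stirling N i + (i+1) * stirling N (i+1)) := by
            rw [Nat.factorial_succ]; rfl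
        _ = (K.choose (i+1) * (i+1)) * (i.factorial * stirling N i)
              + (i+1) * (K.choose (i+1) * ((i+1) * i.factorial) * stirling N (i+1)) := by ring
        _ = (K - i) * (K.choose i * i.factorial * stirling N i)
              + (i+1) * (K.choose (i+1) * (i+1).factorial * stirling N (i+1)) := by
            rw [hc, Nat.factorial_succ]; ring
    rw [Finset.sum_congr rfl (fun i _ => h1 i), Finset.sum_add_distrib]
    have hU : ∑ i ∈ Finset.range K, (K - i) * (K.choose i * i.factorial * stirling N i)
        = ∑ i ∈ Finset.range (K+1), (K - i) * (K.choose i * i.factorial * stirling N i) := by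
      rw [Finset.sum_range_succ]; simp
    have hV : ∑ i ∈ Finset.range K, (i+1) * (K.choose (i+1) * (i+1).factorial * stirling N (i+1))
        = ∑ i ∈ Finset.range (K+1), i * (K.choose i * i.factorial * stirling N i) := by
      rw [Finset.sum_range_succ']; simp
    rw [hU, hV, stirling_succ_zero, Nat.mul_zero, Nat.add_zero, ← Finset.sum_add_distrib]
    have : ∀ i ∈ Finset.range (K+1),
        (K - i) * (K.choose i * i.factorial * stirling N i)
          + i * (K.choose i * i.factorial * stirling N i)
        = K * (K.choose i * i.factorial * stirling N i) := by
      intro i hi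
      rw [Finset.mem_range] at hi
      have : K - i + i = K := by omega
      rw [← add_mul, this]
    rw [Finset.sum_congr rfl this, ← Finset.mul_sum, ih K, pow_succ]
    ring

lemma stirling_ub (N K : ℕ) : K.factorial * stirling N K ≤ K ^ N := by
  have h := stirling_id N K
  rw [← h]
  have hmem : K ∈ Finset.range (K+1) := Finset.self_mem_range_succ K
  calc K.factorial * stirling N K = K.choose K * K.factorial * stirling N K := by
        rw [Nat.choose_self, one_mul]
    _ ≤ _ := Finset.single_le_sum
        (f := fun j => K.choose j * j.factorial * stirling N j) (fun i _ => Nat.zero_le _) hmem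

lemma choose_le_mul (K j : ℕ) (hj : j < K) : K.choose j ≤ K * (K-1).choose j := by
  have h1 : K.choose j * (K - j) = K * (K-1).choose j := by
    have h2 : K.choose j * (K - j) = K.choose (j+1) * (j+1) := (Nat.choose_succ_right_eq K j).symm
    have h3 : Nat.succ (K-1) * (K-1).choose j = (K-1+1).choose (j+1) * (j+1) :=
      Nat.add_one_mul_choose_eq (K-1) j
    have hK : K - 1 + 1 = K := by omega
    rw [Nat.succ_eq_add_one, hK] at h3
    rw [h2, ← h3]
  calc K.choose j ≤ K.choose j * (K - j) := Nat.le_mul_of_pos_right _ (by omega)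
    _ = K * (K-1).choose j := h1

lemma stirling_lb (N K : ℕ) (hK : 1 ≤ K) :
    K ^ N ≤ K.factorial * stirling N K + K * (K-1) ^ N := by
  have h := stirling_id N K
  rw [← h, Finset.sum_range_succ, Nat.choose_self, one_mul]
  have hsum : ∑ j ∈ Finset.range K, K.choose j * j.factorial * stirling N j
      ≤ K * (K-1) ^ N := by
    have hK1 : K - 1 + 1 = K := by omega
    have h2 := stirling_id N (K-1)
    rw [hK1] at h2
    rw [← h2, Finset.mul_sum]
    apply Finset.sum_le_sum
    intro j hj
    rw [Finset.mem_range] at hj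
    calc K.choose j * j.factorial * stirling N j
        ≤ (K * (K-1).choose j) * j.factorial * stirling N j := by
          exact Nat.mul_le_mul_right _ (Nat.mul_le_mul_right _ (choose_le_mul K j hj))
      _ = K * ((K-1).choose j * j.factorial * stirling N j) := by ring
  omega

lemma succ_pow_ge (x m : ℕ) : x^(m+1) + (m+1) * x^m ≤ (x+1)^(m+1) := by
  induction m with
  | zero => simpa using by omega
  | succ m ih =>
    have h : (x+1)^(m+2) = (x+1) * (x+1)^(m+1) := by ring
    calc x^(m+2) + (m+2) * x^(m+1)
        ≤ (x+1) * (x^(m+1) + (m+1) * x^m) := by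
          have e : (x+1) * (x^(m+1) + (m+1) * x^m)
              = x^(m+2) + (m+2)*x^(m+1) + (m+1)*x^m := by ring
          rw [e]
          exact Nat.le_add_right _ _
      _ ≤ (x+1) * (x+1)^(m+1) := Nat.mul_le_mul_left _ ih
      _ = (x+1)^(m+2) := by ring

lemma two_mul_pow (a : ℕ) (ha : 1 ≤ a) : 2 * a^a ≤ (a+1)^a := by
  obtain ⟨b, rfl⟩ : ∃ b, a = b + 1 := ⟨a - 1, by omega⟩
  have := succ_pow_ge (b+1) b
  have h : (b+1) * (b+1)^b = (b+1)^(b+1) := by rw [← pow_succ']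
  omega

lemma pow_ratio (a g d : ℕ) (ha : 1 ≤ a) (h : d^a ≤ 2^g) :
    d * a^(a+g) ≤ (a+1)^(a+g) := by
  set q := g / a with hq
  have hgs : g = a * q + g % a := (Nat.div_add_mod g a).symm
  have hsa : g % a < a := Nat.mod_lt _ (by omega)
  have haq : a * (q+1) = a * q + a := by ring
  have hd : d ≤ 2^(q+1) := by
    have h1 : d^a ≤ (2^(q+1))^a := by
      calc d^a ≤ 2^g := h
        _ ≤ 2^(a*(q+1)) := Nat.pow_le_pow_right (by norm_num) (by omega)
        _ = (2^(q+1))^a := by rw [← pow_mul, Nat.mul_comm]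
    exact le_of_pow_le_pow_left₀ (by omega) (Nat.zero_le _) h1
  have key : 2^(q+1) * a^(a+g) ≤ (a+1)^(a+g) := by
    have e1 : a ^ (a+g) = (a^a)^(q+1) * a^(g % a) := by
      rw [← pow_mul, ← pow_add]; congr 1; omega
    have e2 : (a+1) ^ (a+g) = ((a+1)^a)^(q+1) * (a+1)^(g % a) := by
      rw [← pow_mul, ← pow_add]; congr 1; omega
    rw [e1, e2]
    calc 2^(q+1) * ((a^a)^(q+1) * a^(g % a))
        = (2*a^a)^(q+1) * a^(g % a) := by rw [mul_pow]; ring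
      _ ≤ ((a+1)^a)^(q+1) * (a+1)^(g % a) := by
          exact Nat.mul_le_mul (Nat.pow_le_pow_left (two_mul_pow a ha) _)
            (Nat.pow_le_pow_left (by omega) _)
  calc d * a^(a+g) ≤ 2^(q+1) * a^(a+g) := Nat.mul_le_mul_right _ hd
    _ ≤ (a+1)^(a+g) := key

lemma stirling_ratio (K g c : ℕ) (hK : 2 ≤ K) (h : (c + (K-1))^(K-1) ≤ 2^g) :
    c * stirling (K-1+g) (K-1) ≤ stirling (K+g) K := by
  obtain ⟨a, rfl⟩ : ∃ a, K = a + 1 := ⟨K - 1, by omega⟩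
  have ha : 1 ≤ a := by omega
  simp only [Nat.add_sub_cancel] at h ⊢
  have h1 : a.factorial * stirling (a+g) a ≤ a^(a+g) := stirling_ub (a+g) a
  have h2 : (c + a) * a^(a+g) ≤ (a+1)^(a+g) := pow_ratio a g (c+a) ha h
  have h3 : (a+1)^(a+1+g) ≤ (a+1).factorial * stirling (a+1+g) (a+1) + (a+1) * a^(a+1+g) := by
    have := stirling_lb (a+1+g) (a+1) (by omega)
    simpa using this
  have h4 : (a+1).factorial * (c * stirling (a+g) a)
      ≤ (a+1).factorial * stirling (a+1+g) (a+1) := by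
    have e1 : (a+1).factorial * (c * stirling (a+g) a)
        = (a+1) * c * (a.factorial * stirling (a+g) a) := by
      rw [Nat.factorial_succ]; ring
    have e2 : (a+1) * c * (a.factorial * stirling (a+g) a) ≤ (a+1) * c * a^(a+g) :=
      Nat.mul_le_mul_left _ h1
    have e3 : (a+1) * c * a^(a+g) + (a+1) * a^(a+1+g) ≤ (a+1)^(a+1+g) := by
      have : (a+1) * c * a^(a+g) + (a+1) * a^(a+1+g) = (a+1) * ((c+a) * a^(a+g)) := by
        have : a^(a+1+g) = a * a^(a+g) := by rw [← pow_succ']; ring_nf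
        rw [this]; ring
      rw [this]
      calc (a+1) * ((c+a) * a^(a+g)) ≤ (a+1) * (a+1)^(a+g) := Nat.mul_le_mul_left _ h2
        _ = (a+1)^(a+1+g) := by rw [← pow_succ']; ring_nf
    omega
  exact Nat.le_of_mul_le_mul_left h4 (Nat.factorial_pos _)

lemma alt_bound : ∀ (L : ℕ) (f : ℕ → ℤ), (∀ i, 0 ≤ f i) → (∀ i, f (i+1) ≤ f i) →
    0 ≤ (∑ i ∈ Finset.range L, (-1)^i * f i) ∧ (∑ i ∈ Finset.range L, (-1)^i * f i) ≤ f 0 := by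
  intro L
  induction L using Nat.strong_induction_on with
  | _ L ih =>
    match L with
    | 0 => intro f h0 h1; simp [h0 0]
    | 1 => intro f h0 h1; simp [h0 0]
    | (L+2) =>
      intro f h0 h1
      have hre : ∑ i ∈ Finset.range (L+2), (-1:ℤ)^i * f i
          = (∑ i ∈ Finset.range L, (-1)^i * f (i+2)) + (f 0 - f 1) := by
        rw [Finset.sum_range_succ' (fun i => (-1:ℤ)^i * f i) (L+1)]
        rw [Finset.sum_range_succ' (fun i => (-1:ℤ)^(i+1) * f (i+1)) L]
        have : ∀ i, (-1:ℤ)^(i+1+1) * f (i+1+1) = (-1)^i * f (i+2) := by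
          intro i
          have : (-1:ℤ)^(i+1+1) = (-1)^i := by rw [pow_add]; ring
          rw [this]
        rw [Finset.sum_congr rfl (fun i _ => this i)]
        ring
      obtain ⟨ht0, ht1⟩ := ih L (by omega) (fun i => f (i+2)) (fun i => h0 _) (fun i => h1 _)
      rw [hre]
      constructor
      · have := h1 0
        linarith
      · have h2 : f 2 ≤ f 1 := h1 1
        linarith

lemma alt_bound3 (L : ℕ) (f : ℕ → ℤ) (h0 : ∀ i, 0 ≤ f i) (h1 : ∀ i, f (i+3) ≤ f (i+2)) :
    (∑ i ∈ Finset.range (L+2), (-1)^i * f i) ≤ f 0 - f 1 + f 2 := by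
  have hre : ∑ i ∈ Finset.range (L+2), (-1:ℤ)^i * f i
      = (∑ i ∈ Finset.range L, (-1)^i * f (i+2)) + (f 0 - f 1) := by
    rw [Finset.sum_range_succ' (fun i => (-1:ℤ)^i * f i) (L+1)]
    rw [Finset.sum_range_succ' (fun i => (-1:ℤ)^(i+1) * f (i+1)) L]
    have : ∀ i, (-1:ℤ)^(i+1+1) * f (i+1+1) = (-1)^i * f (i+2) := by
      intro i
      have : (-1:ℤ)^(i+1+1) = (-1)^i := by rw [pow_add]; ring
      rw [this]
    rw [Finset.sum_congr rfl (fun i _ => this i)]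
    ring
  obtain ⟨_, ht1⟩ := alt_bound L (fun i => f (i+2)) (fun i => h0 _) (fun i => h1 _)
  rw [hre]
  linarith

lemma hyp_translate (k t n : ℕ) (ht : 1 ≤ t) (hk₁ : t + 3 ≤ k)
    (hn : (n : ℝ) ≥ 2 * Lkt k t) :
    2 * t + 2 ≤ n ∧
      ((t+1)*((k-t)+1))^(2*(k-t)+2) ≤ 2^(n - (2*t+2)) := by
  have hrc : ((k - t : ℕ) : ℝ) = (k:ℝ) - t := by
    push_cast [Nat.cast_sub (by omega : t ≤ k)]
    ring
  set r : ℕ := k - t with hrdef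
  set P : ℕ := (t+1)*(r+1) with hPdef
  have hP8 : 8 ≤ P := by
    have : 2 * 4 ≤ (t+1)*(r+1) := Nat.mul_le_mul (by omega) (by omega)
    omega
  have hPc : (((t:ℝ)) + 1) * ((k:ℝ) - t + 1) = (P : ℝ) := by
    rw [hPdef]; push_cast [hrc]; ring
  have hPpos : (0:ℝ) < (P:ℝ) := by
    have : (0:ℕ) < P := by omega
    exact_mod_cast this
  have hP1 : (1:ℝ) ≤ (P:ℝ) := by
    have : (1:ℕ) ≤ P := by omega
    exact_mod_cast this
  have hlog0 : 0 ≤ Real.logb 2 (P:ℝ) := Real.logb_nonneg (by norm_num) hP1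
  have hn' : (n:ℝ) ≥ 2*((t:ℝ)+1) + (2*((r:ℝ)+1)) * Real.logb 2 (P:ℝ) := by
    have hL : Lkt k t = ((t:ℝ) + 1) + ((r:ℝ) + 1) * Real.logb 2 (P:ℝ) := by
      unfold Lkt
      rw [hPc, ← hrc]
    rw [hL] at hn
    linarith
  have hr0 : (0:ℝ) ≤ (r:ℝ)+1 := by positivity
  have hn2 : 2*t+2 ≤ n := by
    have h1 : ((2*t+2 : ℕ) : ℝ) ≤ (n:ℝ) := by
      push_cast
      nlinarith [mul_nonneg (mul_nonneg (by norm_num : (0:ℝ) ≤ 2) hr0) hlog0]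
    exact_mod_cast h1
  refine ⟨hn2, ?_⟩
  set e : ℕ := n - (2*t+2) with hedef
  have hec : (e:ℝ) = (n:ℝ) - (2*(t:ℝ)+2) := by
    rw [hedef]
    push_cast [Nat.cast_sub hn2]
    ring
  have hexp : ((2*r+2 : ℕ):ℝ) * Real.logb 2 (P:ℝ) ≤ (e:ℝ) := by
    rw [hec]
    push_cast
    nlinarith
  have hrpow : ((P:ℝ))^((2*r+2 : ℕ)) ≤ (2:ℝ)^(e : ℕ) := by
    calc ((P:ℝ))^((2*r+2:ℕ))
        = ((2:ℝ) ^ Real.logb 2 (P:ℝ))^((2*r+2:ℕ)) := by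
          rw [Real.rpow_logb (by norm_num) (by norm_num) hPpos]
      _ = ((2:ℝ) ^ Real.logb 2 (P:ℝ))^(((2*r+2:ℕ)):ℝ) := by
          rw [Real.rpow_natCast]
      _ = (2:ℝ) ^ (Real.logb 2 (P:ℝ) * ((2*r+2:ℕ):ℝ)) := by
          rw [← Real.rpow_mul (by norm_num)]
      _ ≤ (2:ℝ) ^ ((e:ℕ):ℝ) := by
          apply Real.rpow_le_rpow_of_exponent_le (by norm_num)
          rw [mul_comm]
          exact hexp
      _ = (2:ℝ)^(e:ℕ) := Real.rpow_natCast 2 e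
  have : ((P^(2*r+2) : ℕ) : ℝ) ≤ ((2^e : ℕ) : ℝ) := by push_cast; exact hrpow
  exact_mod_cast this

lemma part2 (m : ℕ) (hm : (m : ℝ) ≥ 2 * Lkt 4 1) :
      ((1 : ℤ) + 2) * stirling (m - 1 - 1) (4 - 1 - 1) -
          ((1 : ℤ) + 1) * stirling (m - 1 - 2) (4 - 1 - 2) =
        (∑ j ∈ Finset.Icc 1 (4 - 1),
          (-1 : ℤ) ^ (j - 1) * Nat.choose (4 - 1) j * stirling (m - 1 - j) (4 - 1 - j)) + 1 ∧
      ((1 : ℤ) + 2) * stirling (m - 1 - 1) (4 - 1 - 1) -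
          ((1 : ℤ) + 1) * stirling (m - 1 - 2) (4 - 1 - 2) =
        3 * stirling (m - 2) 2 - 2 := by
  have hlog : Real.logb 2 (((1:ℝ) + 1) * ((4:ℝ) - 1 + 1)) = 3 := by
    rw [show ((1:ℝ) + 1) * ((4:ℝ) - 1 + 1) = 2^(3:ℕ) by norm_num]
    rw [Real.logb_pow]
    simp [Real.logb_self_eq_one]
  have hL : Lkt 4 1 = 14 := by
    unfold Lkt
    rw [show ((1:ℕ):ℝ) = (1:ℝ) by norm_num, show ((4:ℕ):ℝ) = (4:ℝ) by norm_num, hlog]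
    norm_num
  have hm5 : 28 ≤ m := by
    rw [hL] at hm
    have : ((28:ℕ):ℝ) ≤ (m:ℝ) := by push_cast; linarith
    exact_mod_cast this
  obtain ⟨m', rfl⟩ : ∃ m', m = m' + 5 := ⟨m - 5, by omega⟩
  have e1 : m' + 5 - 1 - 1 = m' + 3 := by omega
  have e2 : m' + 5 - 2 = m' + 3 := by omega
  have e3 : m' + 5 - 1 - 2 = m' + 2 := by omega
  have e4 : m' + 5 - 1 - 3 = m' + 1 := by omega
  have hIcc : Finset.Icc 1 (4-1) = {1, 2, 3} := rfl
  rw [hIcc]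
  rw [Finset.sum_insert (by decide), Finset.sum_insert (by decide), Finset.sum_singleton]
  norm_num [e1, e2, e3, e4]
  have hs1 : stirling (m' + 4 - 2) 1 = 1 := by
    rw [show m' + 4 - 2 = (m' + 1) + 1 by omega]; exact stirling_one _
  have hs0 : stirling (m' + 4 - 3) 0 = 0 := by
    rw [show m' + 4 - 3 = m' + 1 by omega]; exact stirling_succ_zero _
  rw [hs1, hs0]
  norm_num
  ring

set_option maxHeartbeats 2000000 in
lemma part1 (k t n : ℕ) (ht : 1 ≤ t) (hk₁ : t + 3 ≤ k) (hk₂ : k ≤ 2 * t + 2)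
    (hkt : (k, t) ≠ (4, 1)) (hn : (n : ℝ) ≥ 2 * Lkt k t) :
    ((t : ℤ) + 2) * stirling (n - t - 1) (k - t - 1) -
        ((t : ℤ) + 1) * stirling (n - t - 2) (k - t - 2) >
      (∑ j ∈ Finset.Icc 1 (k - t),
        (-1 : ℤ) ^ (j - 1) * Nat.choose (k - t) j * stirling (n - t - j) (k - t - j)) + t := by
  obtain ⟨hn2, hPe⟩ := hyp_translate k t n ht hk₁ hn
  set r : ℕ := k - t with hrdef
  set m : ℕ := n - t with hmdef
  set P : ℕ := (t+1)*(r+1) with hPdef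
  have hr3 : 3 ≤ r := by omega
  have hrt : r ≤ t + 2 := by omega
  have h2rP : 2*r + 2 ≤ P := by
    have h := Nat.mul_le_mul_right (r+1) (by omega : 2 ≤ t+1)
    omega
  have hP1 : 1 ≤ P := by omega
  have hP2 : P ≤ P^2 := by
    calc P = P * 1 := (Nat.mul_one P).symm
      _ ≤ P * P := Nat.mul_le_mul_left P hP1
      _ = P^2 := (pow_two P).symm
  set g : ℕ := m - r with hgdef
  have hmrg : m = r + g := by omega
  have hg : P^(2*r+2) ≤ 2^g := by
    refine le_trans hPe (Nat.pow_le_pow_right (by norm_num) ?_)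
    omega
  have hg6 : 6*r+6 ≤ g := by
    have h1 : (2:ℕ)^(6*r+6) ≤ 2^g := by
      refine le_trans ?_ hg
      calc (2:ℕ)^(6*r+6) = (2^3)^(2*r+2) := by rw [← pow_mul]; congr 1; ring
        _ ≤ P^(2*r+2) := Nat.pow_le_pow_left (by omega) _
    exact (Nat.pow_le_pow_iff_right (by norm_num)).mp h1
  have hratio : ∀ K c : ℕ, 2 ≤ K → K ≤ r → c + (K-1) ≤ P^2 →
      c * stirling (K-1+g) (K-1) ≤ stirling (K+g) K := by
    intro K c hK2 hKr hc
    apply stirling_ratio K g c hK2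
    calc (c + (K-1))^(K-1) ≤ (P^2)^(K-1) := Nat.pow_le_pow_left hc _
      _ = P^(2*(K-1)) := by rw [← pow_mul]
      _ ≤ P^(2*r+2) := Nat.pow_le_pow_right hP1 (by omega)
      _ ≤ 2^g := hg
  have hc2 : r.choose 2 * 2 = r * (r-1) := by
    have h := Nat.choose_succ_right_eq r 1
    rwa [Nat.choose_one_right] at h
  have hc3 : r.choose 3 * 3 = r.choose 2 * (r - 2) := Nat.choose_succ_right_eq r 2
  set F : ℕ → ℤ := fun i => ((r.choose (i+1) * stirling (m-1-i) (r-1-i) : ℕ) : ℤ) with hFdef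
  have hFnn : ∀ i, 0 ≤ F i := fun i => Int.natCast_nonneg _
  have hFdec : ∀ i, F (i+3) ≤ F (i+2) := by
    intro i
    have key : r.choose (i+4) * stirling (m-4-i) (r-4-i)
        ≤ r.choose (i+3) * stirling (m-3-i) (r-3-i) := by
      rcases Nat.lt_or_ge r (i+4) with h | h
      · rw [Nat.choose_eq_zero_of_lt h]
        simp
      · rcases Nat.eq_or_lt_of_le h with h4 | h5
        · have h0 : r - 4 - i = 0 := by omega
          have hm4 : m - 4 - i = (m - 4 - i - 1) + 1 := by omega
          rw [h0, hm4, stirling_succ_zero]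
          simp
        · set K := r - 3 - i with hKdef
          have hK2 : 2 ≤ K := by omega
          have hs := hratio K r hK2 (by omega) (by
            have h1 : r + (K-1) ≤ 2*r := by omega
            omega)
          rw [show K - 1 + g = m-4-i by omega, show K + g = m-3-i by omega,
              show K - 1 = r-4-i by omega] at hs
          have hch : r.choose (i+4) ≤ r.choose (i+3) * r := by
            have h1 : r.choose (i+4) * (i+4) = r.choose (i+3) * (r - (i+3)) :=
              Nat.choose_succ_right_eq r (i+3)
            have h2 : r.choose (i+4) ≤ r.choose (i+4) * (i+4) :=
              Nat.le_mul_of_pos_right _ (by omega)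
            have h3 : r.choose (i+3) * (r - (i+3)) ≤ r.choose (i+3) * r :=
              Nat.mul_le_mul_left _ (by omega)
            omega
          calc r.choose (i+4) * stirling (m-4-i) (r-4-i)
              ≤ (r.choose (i+3) * r) * stirling (m-4-i) (r-4-i) :=
                Nat.mul_le_mul_right _ hch
            _ = r.choose (i+3) * (r * stirling (m-4-i) (r-4-i)) := by ring
            _ ≤ r.choose (i+3) * stirling (m-3-i) K := Nat.mul_le_mul_left _ hs
    simp only [hFdef]
    rw [show m - 1 - (i+3) = m-4-i by omega, show r - 1 - (i+3) = r-4-i by omega,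
        show m - 1 - (i+2) = m-3-i by omega, show r - 1 - (i+2) = r-3-i by omega,
        show i+3+1 = i+4 by omega, show i+2+1 = i+3 by omega]
    exact_mod_cast key
  have hsum_eq : (∑ j ∈ Finset.Icc 1 r,
        (-1 : ℤ) ^ (j - 1) * (r.choose j : ℤ) * (stirling (m - j) (r - j) : ℤ))
      = ∑ i ∈ Finset.range r, (-1:ℤ)^i * F i := by
    rw [show Finset.Icc 1 r = Finset.Ico 1 (r+1) by rw [Finset.Ico_add_one_right_eq_Icc],
        Finset.sum_Ico_eq_sum_range]
    refine Finset.sum_congr (by congr 1) ?_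
    intro i hi
    simp only [hFdef]
    rw [show 1 + i - 1 = i by omega, show m - (1+i) = m-1-i by omega,
        show r - (1+i) = r-1-i by omega, Nat.add_comm 1 i]
    push_cast
    ring
  obtain ⟨L, hLr⟩ : ∃ L, r = L + 2 := ⟨r - 2, by omega⟩
  have hbound : (∑ i ∈ Finset.range r, (-1:ℤ)^i * F i) ≤ F 0 - F 1 + F 2 := by
    rw [hLr]
    exact alt_bound3 L F hFnn hFdec
  have hF0 : F 0 = (r : ℤ) * (stirling (m-1) (r-1) : ℤ) := by
    simp only [hFdef]
    rw [show (0:ℕ)+1 = 1 by rfl, Nat.choose_one_right]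
    push_cast
    norm_num
  have hF1 : F 1 = (r.choose 2 : ℤ) * (stirling (m-2) (r-2) : ℤ) := by
    simp only [hFdef]
    rw [show (1:ℕ)+1 = 2 by rfl, show m-1-1 = m-2 by omega, show r-1-1 = r-2 by omega]
    push_cast
    ring
  have hF2 : F 2 = (r.choose 3 : ℤ) * (stirling (m-3) (r-3) : ℤ) := by
    simp only [hFdef]
    rw [show (2:ℕ)+1 = 3 by rfl, show m-1-2 = m-3 by omega, show r-1-2 = r-3 by omega]
    push_cast
    ring
  have hsum_le : (∑ j ∈ Finset.Icc 1 r,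
        (-1 : ℤ) ^ (j - 1) * (r.choose j : ℤ) * (stirling (m - j) (r - j) : ℤ))
      ≤ (r:ℤ) * (stirling (m-1) (r-1) : ℤ) - (r.choose 2 : ℤ) * (stirling (m-2) (r-2) : ℤ)
        + (r.choose 3 : ℤ) * (stirling (m-3) (r-3) : ℤ) := by
    rw [hsum_eq]
    refine le_trans hbound ?_
    rw [hF0, hF1, hF2]
  have hkey : (r:ℤ) * (stirling (m-1) (r-1) : ℤ) - (r.choose 2 : ℤ) * (stirling (m-2) (r-2) : ℤ)
        + (r.choose 3 : ℤ) * (stirling (m-3) (r-3) : ℤ) + (t:ℤ)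
      < ((t:ℤ)+2) * (stirling (m-1) (r-1) : ℤ) - ((t:ℤ)+1) * (stirling (m-2) (r-2) : ℤ) := by
    rcases Nat.lt_or_ge r (t+2) with hb | ha
    · -- case b : r ≤ t+1
      have hbase : (2*t+2+r.choose 3) + (r-1) ≤ P^2 := by
        have hc6 : r.choose 3 * 6 ≤ r*r*r := by
          have he : r.choose 3 * 6 = r * (r-1) * (r-2) := by
            calc r.choose 3 * 6 = r.choose 3 * 3 * 2 := by ring
              _ = r.choose 2 * (r-2) * 2 := by rw [hc3]
              _ = r.choose 2 * 2 * (r-2) := by ring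
              _ = r * (r-1) * (r-2) := by rw [hc2]
          rw [he]
          exact Nat.mul_le_mul (Nat.mul_le_mul (le_refl r) (Nat.sub_le r 1)) (Nat.sub_le r 2)
        have h1 : r*r*r ≤ (t+1)*(r+1)*(r+1) :=
          Nat.mul_le_mul (Nat.mul_le_mul (show r ≤ t+1 by omega) (show r ≤ r+1 by omega))
            (show r ≤ r+1 by omega)
        have h5 : r.choose 3 ≤ (t+1)*(r+1)*(r+1) :=
          le_trans (Nat.le_mul_of_pos_right _ (by norm_num)) (le_trans hc6 h1)
        have h6 : 3*(t+1) + (t+1)*(r+1)*(r+1) ≤ (t+1)*(t+1)*(r+1)*(r+1) := by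
          have ha : 4*4 ≤ (r+1)*(r+1) :=
            Nat.mul_le_mul (show 4 ≤ r+1 by omega) (show 4 ≤ r+1 by omega)
          have hb : 3*(t+1) + (t+1)*((r+1)*(r+1)) ≤ 2*((t+1)*((r+1)*(r+1))) := by
            have hc : 3*(t+1) ≤ (t+1)*((r+1)*(r+1)) := by
              calc 3*(t+1) ≤ ((r+1)*(r+1))*(t+1) :=
                    Nat.mul_le_mul_right (t+1)
                      (le_trans (show 3 ≤ 4*4 by norm_num) ha)
                _ = (t+1)*((r+1)*(r+1)) := Nat.mul_comm _ _
            omega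
          have hd : 2*((t+1)*((r+1)*(r+1))) ≤ (t+1)*((t+1)*((r+1)*(r+1))) :=
            Nat.mul_le_mul_right _ (by omega)
          calc 3*(t+1) + (t+1)*(r+1)*(r+1) = 3*(t+1) + (t+1)*((r+1)*(r+1)) := by ring
            _ ≤ 2*((t+1)*((r+1)*(r+1))) := hb
            _ ≤ (t+1)*((t+1)*((r+1)*(r+1))) := hd
            _ = (t+1)*(t+1)*(r+1)*(r+1) := by ring
        have h2 : P^2 = (t+1)*(t+1)*(r+1)*(r+1) := by rw [hPdef]; ring
        rw [h2]
        have h4 : (2*t+2+r.choose 3) + (r-1) ≤ 3*(t+1) + r.choose 3 := by omega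
        linarith only [h4, h5, h6]
      have hA12 := hratio (r-1) (2*t+2+r.choose 3) (by omega) (by omega)
        (le_trans (by omega) hbase)
      rw [show r-1-1+g = m-2 by omega, show r-1+g = m-1 by omega,
          show r-1-1 = r-2 by omega] at hA12
      have hA32 : stirling (m-3) (r-3) ≤ stirling (m-2) (r-2) := by
        have h := stirling_le_succ (m-3) (r-3)
        rwa [show m-3+1 = m-2 by omega, show r-3+1 = r-2 by omega] at h
      have hA2pos : 1 ≤ stirling (m-2) (r-2) := stirling_pos _ _ (by omega) (by omega)
      have zA12 : ((2*t+2+r.choose 3 : ℕ):ℤ) * (stirling (m-2) (r-2) : ℤ)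
          ≤ (stirling (m-1) (r-1) : ℤ) := by exact_mod_cast hA12
      have zA32 : (stirling (m-3) (r-3) : ℤ) ≤ (stirling (m-2) (r-2) : ℤ) := by
        exact_mod_cast hA32
      have zA2pos : (1:ℤ) ≤ (stirling (m-2) (r-2) : ℤ) := by exact_mod_cast hA2pos
      have zC3 : (0:ℤ) ≤ (r.choose 3 : ℤ) := Int.natCast_nonneg _
      have zC2A : (0:ℤ) ≤ (r.choose 2 : ℤ) * (stirling (m-2) (r-2) : ℤ) := by positivity
      have zA1 : (0:ℤ) ≤ (stirling (m-1) (r-1) : ℤ) := Int.natCast_nonneg _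
      have zrb : (r:ℤ) ≤ (t:ℤ)+1 := by exact_mod_cast (by omega : r ≤ t+1)
      have ztr : (stirling (m-1) (r-1) : ℤ) ≤ ((t:ℤ)+2-r) * (stirling (m-1) (r-1) : ℤ) := by
        have hp := mul_nonneg (by linarith only [zrb] : (0:ℤ) ≤ (t:ℤ)+1-r) zA1
        linarith only [hp]
      have zC3A : (r.choose 3:ℤ) * (stirling (m-3) (r-3) : ℤ)
          ≤ (r.choose 3:ℤ) * (stirling (m-2) (r-2) : ℤ) :=
        mul_le_mul_of_nonneg_left zA32 zC3
      have ztA2 : (t:ℤ) * 1 ≤ (t:ℤ) * (stirling (m-2) (r-2) : ℤ) :=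
        mul_le_mul_of_nonneg_left zA2pos (by positivity)
      push_cast at zA12
      linarith only [zA12, zC3A, ztA2, ztr, zC2A, zA2pos]
    · -- case a : r = t+2
      have hra : r = t + 2 := by omega
      have ht2 : 2 ≤ t := by
        rcases Nat.lt_or_ge t 2 with h | h
        · exfalso
          apply hkt
          have ht1 : t = 1 := by omega
          have hk4 : k = 4 := by omega
          rw [ht1, hk4]
        · exact h
      have hr4 : 4 ≤ r := by omega
      have hA23 : r * stirling (m-3) (r-3) ≤ stirling (m-2) (r-2) := by
        have h := hratio (r-2) r (by omega) (by omega) (by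
          have h1 : r + (r-2-1) ≤ 2*r := by omega
          omega)
        rwa [show r-2-1+g = m-3 by omega, show r-2+g = m-2 by omega,
            show r-2-1 = r-3 by omega] at h
      have hA3pos : 1 ≤ stirling (m-3) (r-3) := stirling_pos _ _ (by omega) (by omega)
      have zA23 : (r:ℤ) * (stirling (m-3) (r-3) : ℤ) ≤ (stirling (m-2) (r-2) : ℤ) := by
        exact_mod_cast hA23
      have zA3pos : (1:ℤ) ≤ (stirling (m-3) (r-3) : ℤ) := by exact_mod_cast hA3pos
      have zc2 : (r.choose 2:ℤ) * 2 = (r:ℤ) * ((r:ℤ)-1) := by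
        have h := hc2
        have h' : ((r.choose 2 * 2 : ℕ) : ℤ) = ((r * (r-1) : ℕ) : ℤ) := by exact_mod_cast h
        push_cast [Nat.cast_sub (by omega : 1 ≤ r)] at h'
        linarith [h']
      have zc3 : (r.choose 3:ℤ) * 3 = (r.choose 2:ℤ) * ((r:ℤ)-2) := by
        have h := hc3
        have h' : ((r.choose 3 * 3 : ℕ) : ℤ) = ((r.choose 2 * (r-2) : ℕ) : ℤ) := by
          exact_mod_cast h
        push_cast [Nat.cast_sub (by omega : 2 ≤ r)] at h'
        linarith [h']
      have zr4 : (4:ℤ) ≤ (r:ℤ) := by exact_mod_cast hr4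
      have zCge : (r:ℤ) - 1 ≤ (r.choose 2:ℤ) := by
        have hp := mul_nonneg (by linarith only [zr4] : (0:ℤ) ≤ (r:ℤ)-1)
          (by linarith only [zr4] : (0:ℤ) ≤ (r:ℤ)-2)
        linarith only [zc2, hp]
      have hid : 3*((((r.choose 2:ℤ) - ((r:ℤ)-1)) * r) - (r.choose 3:ℤ) - ((r:ℤ)-1))
          = ((r:ℤ)-3)*((r:ℤ)-1)*((r:ℤ)+1) := by
        linear_combination ((r:ℤ)+1) * zc2 - zc3
      have hprod : (0:ℤ) ≤ ((r:ℤ)-3)*((r:ℤ)-1)*((r:ℤ)+1) :=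
        mul_nonneg (mul_nonneg (by linarith) (by linarith)) (by linarith)
      have hcoef : (r.choose 3:ℤ) + ((r:ℤ)-1) ≤ ((r.choose 2:ℤ) - ((r:ℤ)-1)) * r := by
        linarith only [hid, hprod]
      have zCnn : (0:ℤ) ≤ (r.choose 2:ℤ) - ((r:ℤ)-1) := by linarith [zCge]
      have q0 : ((r.choose 2:ℤ) - ((r:ℤ)-1)) * ((r:ℤ) * (stirling (m-3) (r-3) : ℤ))
          ≤ ((r.choose 2:ℤ) - ((r:ℤ)-1)) * (stirling (m-2) (r-2) : ℤ) :=
        mul_le_mul_of_nonneg_left zA23 zCnn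
      have q1 : ((r.choose 3:ℤ) + ((r:ℤ)-1)) * (stirling (m-3) (r-3) : ℤ)
          ≤ (((r.choose 2:ℤ) - ((r:ℤ)-1)) * r) * (stirling (m-3) (r-3) : ℤ) :=
        mul_le_mul_of_nonneg_right hcoef (Int.natCast_nonneg _)
      have q2 : (r.choose 3:ℤ) * (stirling (m-3) (r-3) : ℤ) + ((r:ℤ)-1)
          ≤ ((r.choose 3:ℤ) + ((r:ℤ)-1)) * (stirling (m-3) (r-3) : ℤ) := by
        have hp := mul_nonneg (by linarith : (0:ℤ) ≤ (r:ℤ)-1)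
          (by linarith [zA3pos] : (0:ℤ) ≤ (stirling (m-3) (r-3) : ℤ) - 1)
        linarith only [hp]
      have zra : (r:ℤ) = (t:ℤ)+2 := by exact_mod_cast hra
      have zrA1 : (r:ℤ) * (stirling (m-1) (r-1) : ℤ)
          = ((t:ℤ)+2) * (stirling (m-1) (r-1) : ℤ) := by rw [zra]
      have zrA2 : ((r:ℤ)-1) * (stirling (m-2) (r-2) : ℤ)
          = ((t:ℤ)+1) * (stirling (m-2) (r-2) : ℤ) := by rw [zra]; ring
      linarith only [q0, q1, q2, zrA1, zrA2, zra]
  linarith only [hsum_le, hkey]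


theorem stmt_19 (k t n : ℕ) (ht : 1 ≤ t) (hk₁ : t + 3 ≤ k) (hk₂ : k ≤ 2 * t + 2)
    (hkt : (k, t) ≠ (4, 1)) (hn : (n : ℝ) ≥ 2 * Lkt k t) :
    (((t : ℤ) + 2) * stirling (n - t - 1) (k - t - 1) -
        ((t : ℤ) + 1) * stirling (n - t - 2) (k - t - 2) >
      (∑ j ∈ Finset.Icc 1 (k - t),
        (-1 : ℤ) ^ (j - 1) * Nat.choose (k - t) j * stirling (n - t - j) (k - t - j)) + t) ∧
    (∀ m : ℕ, (m : ℝ) ≥ 2 * Lkt 4 1 →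
      ((1 : ℤ) + 2) * stirling (m - 1 - 1) (4 - 1 - 1) -
          ((1 : ℤ) + 1) * stirling (m - 1 - 2) (4 - 1 - 2) =
        (∑ j ∈ Finset.Icc 1 (4 - 1),
          (-1 : ℤ) ^ (j - 1) * Nat.choose (4 - 1) j * stirling (m - 1 - j) (4 - 1 - j)) + 1 ∧
      ((1 : ℤ) + 2) * stirling (m - 1 - 1) (4 - 1 - 1) -
          ((1 : ℤ) + 1) * stirling (m - 1 - 2) (4 - 1 - 2) =
        3 * stirling (m - 2) 2 - 2) := by
  exact ⟨part1 k t n ht hk₁ hk₂ hkt hn, part2⟩
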